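/- Suppose H is a v × b binary matrix that is an incidence matrix of a PBD of index one with all blocks of size ≥ 2 and all points in ≥ 2 blocks, with v ≥ 2. Then the Tanner graph of H has girth at most 6; in particular H cannot have girth 8 or more. -/

import Mathlib

/-- The Tanner graph of an incidence matrix of a pairwise
balanced design of index one with `v ≥ 2` points, all blocks of size ≥ 2 and
all points in ≥ 2 blocks has girth at most 6: there is a 4-cycle (two points in
two common blocks) or a 6-cycle (three points and three blocks forming a
`3 × 3` submatrix with two ones in each row and column); in particular the
girth cannot be 8 or more. -/
theorem stmt17 (V : Type*) [Fintype V] [DecidableEq V] (B : Finset (Finset V))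
    (hpbd : ∀ x y : V, x ≠ y → (B.filter (fun blk => x ∈ blk ∧ y ∈ blk)).card = 1)
    (hblk : ∀ blk ∈ B, 2 ≤ blk.card)
    (hrep : ∀ x : V, 2 ≤ (B.filter (fun blk => x ∈ blk)).card)
    (hv : 2 ≤ Fintype.card V) :
    (∃ (x y : V) (B₁ B₂ : Finset V), x ≠ y ∧ B₁ ≠ B₂ ∧ B₁ ∈ B ∧ B₂ ∈ B ∧
        x ∈ B₁ ∧ x ∈ B₂ ∧ y ∈ B₁ ∧ y ∈ B₂) ∨
    (∃ (x y z : V) (B₁ B₂ B₃ : Finset V), x ≠ y ∧ y ≠ z ∧ x ≠ z ∧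
        B₁ ≠ B₂ ∧ B₂ ≠ B₃ ∧ B₁ ≠ B₃ ∧ B₁ ∈ B ∧ B₂ ∈ B ∧ B₃ ∈ B ∧
        x ∈ B₁ ∧ x ∈ B₂ ∧ x ∉ B₃ ∧
        y ∈ B₁ ∧ y ∉ B₂ ∧ y ∈ B₃ ∧
        z ∉ B₁ ∧ z ∈ B₂ ∧ z ∈ B₃) := by
  right
  -- uniqueness of the block through a pair
  have huniq : ∀ x y : V, x ≠ y → ∀ A A' : Finset V, A ∈ B → A' ∈ B →
      x ∈ A → y ∈ A → x ∈ A' → y ∈ A' → A = A' := by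
    intro x y h A A' hA hA' hxA hyA hxA' hyA'
    have hc := hpbd x y h
    have h1 : A ∈ B.filter (fun blk => x ∈ blk ∧ y ∈ blk) :=
      Finset.mem_filter.2 ⟨hA, hxA, hyA⟩
    have h2 : A' ∈ B.filter (fun blk => x ∈ blk ∧ y ∈ blk) :=
      Finset.mem_filter.2 ⟨hA', hxA', hyA'⟩
    exact Finset.card_le_one.1 hc.le _ h1 _ h2
  have hex : ∀ x y : V, x ≠ y → ∃ A ∈ B, x ∈ A ∧ y ∈ A := by
    intro x y h
    have hc := hpbd x y h
    obtain ⟨A, hA⟩ := Finset.card_eq_one.1 hc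
    have : A ∈ B.filter (fun blk => x ∈ blk ∧ y ∈ blk) := by
      rw [hA]; exact Finset.mem_singleton_self A
    rw [Finset.mem_filter] at this
    exact ⟨A, this.1, this.2⟩
  obtain ⟨x, y, hxy⟩ := Fintype.exists_pair_of_one_lt_card hv
  obtain ⟨B₁, hB₁B, hxB₁, hyB₁⟩ := hex x y hxy
  -- second block through x
  obtain ⟨B₂, hB₂f, hB₂ne⟩ :=
    Finset.exists_mem_ne (lt_of_lt_of_le one_lt_two (hrep x)) B₁
  rw [Finset.mem_filter] at hB₂f
  obtain ⟨hB₂B, hxB₂⟩ := hB₂f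
  -- point z ≠ x in B₂
  obtain ⟨z, hzB₂, hzx⟩ :=
    Finset.exists_mem_ne (lt_of_lt_of_le one_lt_two (hblk B₂ hB₂B)) x
  have hzB₁ : z ∉ B₁ := fun hz =>
    hB₂ne (huniq x z (Ne.symm hzx) B₂ B₁ hB₂B hB₁B hxB₂ hzB₂ hxB₁ hz)
  have hyB₂ : y ∉ B₂ := fun hy =>
    hB₂ne (huniq x y hxy B₂ B₁ hB₂B hB₁B hxB₂ hy hxB₁ hyB₁)
  have hyz : y ≠ z := fun h => hzB₁ (h ▸ hyB₁)
  obtain ⟨B₃, hB₃B, hyB₃, hzB₃⟩ := hex y z hyz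
  have hxB₃ : x ∉ B₃ := fun hx =>
    hzB₁ (huniq x y hxy B₃ B₁ hB₃B hB₁B hx hyB₃ hxB₁ hyB₁ ▸ hzB₃)
  have hB₂B₃ : B₂ ≠ B₃ := fun h => hyB₂ (h ▸ hyB₃)
  have hB₁B₃ : B₁ ≠ B₃ := fun h => hzB₁ (h ▸ hzB₃)
  exact ⟨x, y, z, B₁, B₂, B₃, hxy, hyz, Ne.symm hzx, fun h => hB₂ne h.symm,
    hB₂B₃, hB₁B₃, hB₁B, hB₂B, hB₃B, hxB₁, hxB₂, hxB₃, hyB₁, hyB₂, hyB₃,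
    hzB₁, hzB₂, hzB₃⟩
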